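/- Let R ∈ ℝ^{n×n} define a zero-sum game with a unique Nash equilibrium (x*,y*) and value v = x*ᵀRy*. Then the equilibrium is quasi-strict: for every i ∉ supp(x*), e_iᵀRy* < v, and for every j ∉ supp(y*), x*ᵀRe_j > v. (In particular, for any η > 0, the quantities e^{η e_iᵀRy*}/e^{ηv} for i ∉ supp(x*) and e^{−η e_jᵀRᵀx*}/e^{−ηv} for j ∉ supp(y*) are strictly less than one.) -/

import Mathlib

open Finset Real Filter

/-- A probability vector (mixed strategy) on `Fin n`. -/
def IsProbVec {n : ℕ} (x : Fin n → ℝ) : Prop := (∀ i, 0 ≤ x i) ∧ ∑ i, x i = 1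

/-- A fully mixed strategy: all coordinates strictly positive. -/
def FullyMixed {n : ℕ} (x : Fin n → ℝ) : Prop := ∀ i, 0 < x i

/-- Expected payoff of the row player, `xᵀ R y`. -/
def payoff {n : ℕ} (R : Matrix (Fin n) (Fin n) ℝ) (x y : Fin n → ℝ) : ℝ :=
  ∑ i, ∑ j, x i * R i j * y j

/-- `e_iᵀ R y`, the payoff of pure row strategy `i` against `y`. -/
def rowPayoff {n : ℕ} (R : Matrix (Fin n) (Fin n) ℝ) (y : Fin n → ℝ) (i : Fin n) : ℝ :=
  ∑ j, R i j * y j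

/-- `xᵀ R e_j`, the (row player's) payoff when the column player plays pure strategy `j`. -/
def colPayoff {n : ℕ} (R : Matrix (Fin n) (Fin n) ℝ) (x : Fin n → ℝ) (j : Fin n) : ℝ :=
  ∑ i, x i * R i j

/-- `(x, y)` is a Nash equilibrium of the zero-sum game with payoff matrix `R`. -/
def IsNash {n : ℕ} (R : Matrix (Fin n) (Fin n) ℝ) (x y : Fin n → ℝ) : Prop :=
  IsProbVec x ∧ IsProbVec y ∧ (∀ i, rowPayoff R y i ≤ payoff R x y) ∧
    (∀ j, payoff R x y ≤ colPayoff R x j)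

/-- `(x, y)` is an `ε`-Nash equilibrium. -/
def IsEpsNash {n : ℕ} (R : Matrix (Fin n) (Fin n) ℝ) (x y : Fin n → ℝ) (ε : ℝ) : Prop :=
  (∀ i, rowPayoff R y i ≤ payoff R x y + ε) ∧ (∀ j, payoff R x y - ε ≤ colPayoff R x j)

/-- Intermediate (IBR) strategy of the row player:
`x̂ᵢ = xᵢ e^{ξ (Ry)ᵢ} / ∑ⱼ xⱼ e^{ξ (Ry)ⱼ}`. -/
noncomputable def brX {n : ℕ} (ξ : ℝ) (R : Matrix (Fin n) (Fin n) ℝ) (x y : Fin n → ℝ) :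
    Fin n → ℝ :=
  fun i => x i * Real.exp (ξ * rowPayoff R y i) / ∑ j, x j * Real.exp (ξ * rowPayoff R y j)

/-- Intermediate (IBR) strategy of the column player:
`ŷⱼ = yⱼ e^{-ξ (Rᵀx)ⱼ} / ∑ₖ yₖ e^{-ξ (Rᵀx)ₖ}`. -/
noncomputable def brY {n : ℕ} (ξ : ℝ) (R : Matrix (Fin n) (Fin n) ℝ) (x y : Fin n → ℝ) :
    Fin n → ℝ :=
  fun j => y j * Real.exp (-(ξ * colPayoff R x j)) / ∑ k, y k * Real.exp (-(ξ * colPayoff R x k))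

/-- Multiplicative-weights update of the row player against the (intermediate) strategy `yh`. -/
noncomputable def mwuX {n : ℕ} (η : ℝ) (R : Matrix (Fin n) (Fin n) ℝ) (x yh : Fin n → ℝ) :
    Fin n → ℝ :=
  fun i => x i * Real.exp (η * rowPayoff R yh i) / ∑ j, x j * Real.exp (η * rowPayoff R yh j)

/-- Multiplicative-weights update of the column player against the (intermediate) strategy `xh`. -/
noncomputable def mwuY {n : ℕ} (η : ℝ) (R : Matrix (Fin n) (Fin n) ℝ) (y xh : Fin n → ℝ) :
    Fin n → ℝ :=
  fun j => y j * Real.exp (-(η * colPayoff R xh j)) / ∑ k, y k * Real.exp (-(η * colPayoff R xh k))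

/-- One full step of the FLBR-MWU dynamics with update rate `η` and intermediate rate `ξ`. -/
noncomputable def flbrStep {n : ℕ} (η ξ : ℝ) (R : Matrix (Fin n) (Fin n) ℝ)
    (p : (Fin n → ℝ) × (Fin n → ℝ)) : (Fin n → ℝ) × (Fin n → ℝ) :=
  (mwuX η R p.1 (brY ξ R p.1 p.2), mwuY η R p.2 (brX ξ R p.1 p.2))

/-- Kullback–Leibler divergence `∑ᵢ xsᵢ ln(xsᵢ / xᵢ)` (with the convention `0 · ln 0 = 0`). -/
noncomputable def klDiv {n : ℕ} (xs x : Fin n → ℝ) : ℝ := ∑ i, xs i * Real.log (xs i / x i)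

/-- KL divergence of the profile `(x, y)` from `(xs, ys)`. -/
noncomputable def klProfile {n : ℕ} (xs ys x y : Fin n → ℝ) : ℝ := klDiv xs x + klDiv ys y


open scoped RealInnerProductSpace

section FarkasCone

variable {E : Type*} [NormedAddCommGroup E] [InnerProductSpace ℝ E] [FiniteDimensional ℝ E]
variable {ι : Type*} [Fintype ι] [DecidableEq ι]

def coneSet (g : ι → E) (T : Finset ι) : Set E :=
  {z | ∃ w : ι → ℝ, (∀ k, 0 ≤ w k) ∧ ∑ k ∈ T, w k • g k = z}

lemma coneSet_mono (g : ι → E) {T T' : Finset ι} (h : T ⊆ T') :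
    coneSet g T ⊆ coneSet g T' := by
  rintro z ⟨w, hw, rfl⟩
  refine ⟨fun k => if k ∈ T then w k else 0, fun k => by by_cases hk : k ∈ T <;> simp [hk, hw k], ?_⟩
  rw [← Finset.sum_subset h (by intro k _ hk; simp [hk])]
  exact Finset.sum_congr rfl (fun k hk => by simp [hk])

lemma coneSet_li_closed (g : ι → E) {T : Finset ι}
    (hLI : LinearIndependent ℝ (fun k : ↥T => g k)) : IsClosed (coneSet g T) := by
  classical
  set f : (↥T → ℝ) →ₗ[ℝ] E := ∑ j : ↥T, (LinearMap.proj j).smulRight (g j) with hf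
  have hfapp : ∀ w : ↥T → ℝ, f w = ∑ j : ↥T, w j • g j := by
    intro w; simp [hf, LinearMap.sum_apply]
  have hinj : Function.Injective f := by
    rw [← LinearMap.ker_eq_bot, LinearMap.ker_eq_bot']
    intro w hw
    rw [hfapp] at hw
    exact funext (Fintype.linearIndependent_iff.mp hLI w hw)
  have hemb := LinearMap.isClosedEmbedding_of_injective (LinearMap.ker_eq_bot.mpr hinj)
  have hset : coneSet g T = f '' {w : ↥T → ℝ | ∀ j, 0 ≤ w j} := by
    ext z
    constructor
    · rintro ⟨w, hw, rfl⟩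
      exact ⟨fun j => w j, fun j => hw j, by rw [hfapp]; simp [Finset.univ_eq_attach, ← Finset.sum_attach T (fun k => w k • g k)]⟩
    · rintro ⟨w, hw, rfl⟩
      refine ⟨fun k => if hk : k ∈ T then w ⟨k, hk⟩ else 0, fun k => by
        by_cases hk : k ∈ T <;> simp [hk, hw _], ?_⟩
      rw [hfapp, show (∑ k ∈ T, (fun k => if hk : k ∈ T then w ⟨k, hk⟩ else 0) k • g k) = ∑ x ∈ T.attach, (fun k => if hk : k ∈ T then w ⟨k, hk⟩ else 0) x.1 • g x.1 from (Finset.sum_attach T _).symm, Finset.univ_eq_attach]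
      exact Finset.sum_congr rfl (fun j _ => by simp [j.2])
  rw [hset]
  refine hemb.isClosedMap _ ?_
  have : {w : ↥T → ℝ | ∀ j, 0 ≤ w j} = ⋂ j, {w : ↥T → ℝ | 0 ≤ w j} := by
    ext w; simp [Set.mem_iInter]
  rw [this]
  exact isClosed_iInter (fun j => isClosed_le continuous_const (continuous_apply j))

lemma coneSet_reduce (g : ι → E) (T : Finset ι) (w μ : ι → ℝ) (hw : ∀ k, 0 ≤ w k)
    (hμsum : ∑ k ∈ T, μ k • g k = 0) (k₀ : ι) (hk₀T : k₀ ∈ T) (hk₀ : 0 < μ k₀) :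
    ∃ k₁ ∈ T, (∑ k ∈ T, w k • g k) ∈ coneSet g (T.erase k₁) := by
  classical
  have hPne : (T.filter (fun k => 0 < μ k)).Nonempty := ⟨k₀, by simp [hk₀T, hk₀]⟩
  obtain ⟨k₁, hk₁P, hmin⟩ := Finset.exists_min_image _ (fun k => w k / μ k) hPne
  rw [Finset.mem_filter] at hk₁P
  obtain ⟨hk₁T, hk₁pos⟩ := hk₁P
  set t : ℝ := w k₁ / μ k₁ with ht
  have ht0 : 0 ≤ t := div_nonneg (hw k₁) hk₁pos.le
  set w' : ι → ℝ := fun k => w k - t * μ k with hw'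
  have hw'T : ∀ k ∈ T, 0 ≤ w' k := by
    intro k hkT
    by_cases hμk : 0 < μ k
    · have := hmin k (Finset.mem_filter.mpr ⟨hkT, hμk⟩)
      have : t * μ k ≤ w k := by
        rw [← le_div_iff₀ hμk]; exact this
      simpa [hw'] using this
    · push_neg at hμk
      have : t * μ k ≤ 0 := mul_nonpos_of_nonneg_of_nonpos ht0 hμk
      simp only [hw']
      linarith [hw k]
  have hk₁0 : w' k₁ = 0 := by
    simp only [hw', ht]
    field_simp
    ring
  have hsum' : ∑ k ∈ T, w' k • g k = ∑ k ∈ T, w k • g k := by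
    simp only [hw', sub_smul, Finset.sum_sub_distrib]
    have : ∑ k ∈ T, (t * μ k) • g k = t • ∑ k ∈ T, μ k • g k := by
      rw [Finset.smul_sum]; exact Finset.sum_congr rfl (fun k _ => (smul_smul t (μ k) (g k)).symm)
    rw [this, hμsum, smul_zero, sub_zero]
  refine ⟨k₁, hk₁T, (fun k => if k ∈ T then w' k else 0), fun k => ?_, ?_⟩
  · by_cases hk : k ∈ T
    · simp [hk, hw'T k hk]
    · simp [hk]
  · have herase : ∑ k ∈ T.erase k₁, (if k ∈ T then w' k else 0) • g k
        = ∑ k ∈ T.erase k₁, w' k • g k :=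
      Finset.sum_congr rfl (fun k hk => by simp [Finset.mem_of_mem_erase hk])
    rw [herase, Finset.sum_erase _ (by rw [hk₁0, zero_smul]), hsum']

lemma coneSet_caratheodory (g : ι → E) :
    ∀ (N : ℕ) (T : Finset ι), T.card ≤ N → ∀ z ∈ coneSet g T,
      ∃ T', T' ⊆ T ∧ LinearIndependent ℝ (fun k : ↥T' => g (k : ι)) ∧ z ∈ coneSet g T' := by
  intro N
  induction N with
  | zero =>
    intro T hT z hz
    rw [Nat.le_zero, Finset.card_eq_zero] at hT
    subst hT
    exact ⟨∅, subset_rfl, linearIndependent_empty_type, hz⟩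
  | succ N ih =>
    intro T hT z hz
    by_cases hLI : LinearIndependent ℝ (fun k : ↥T => g (k : ι))
    · exact ⟨T, subset_rfl, hLI, hz⟩
    · obtain ⟨c, hcsum, k₀, hck₀⟩ := Fintype.not_linearIndependent_iff.mp hLI
      set lam : ι → ℝ := fun k => if hk : k ∈ T then c ⟨k, hk⟩ else 0 with hlam
      have hlamsum : ∑ k ∈ T, lam k • g k = 0 := by
        rw [show (∑ k ∈ T, lam k • g k) = ∑ x ∈ T.attach, lam x.1 • g x.1 from
          (Finset.sum_attach T _).symm]
        rw [← hcsum, Finset.univ_eq_attach]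
        exact Finset.sum_congr rfl (fun j _ => by simp [hlam, j.2])
      obtain ⟨w, hw, hwsum⟩ := hz
      have key : ∃ k₁ ∈ T, (∑ k ∈ T, w k • g k) ∈ coneSet g (T.erase k₁) := by
        rcases lt_or_gt_of_ne hck₀ with h | h
        · refine coneSet_reduce g T w (fun k => -lam k) hw ?_ k₀ k₀.2 ?_
          · simp only [neg_smul, Finset.sum_neg_distrib, hlamsum, neg_zero]
          · simp only [hlam, k₀.2, dif_pos]
            simpa using h
        · exact coneSet_reduce g T w lam hw hlamsum k₀ k₀.2 (by simp [hlam, k₀.2]; exact h)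
      obtain ⟨k₁, hk₁T, hmem⟩ := key
      rw [hwsum] at hmem
      obtain ⟨T', hT'sub, hT'LI, hT'mem⟩ := ih (T.erase k₁)
        (by rw [Finset.card_erase_of_mem hk₁T]; omega) z hmem
      exact ⟨T', hT'sub.trans (Finset.erase_subset _ _), hT'LI, hT'mem⟩

lemma coneSet_univ_closed (g : ι → E) : IsClosed (coneSet g Finset.univ) := by
  classical
  have heq : coneSet g Finset.univ =
      ⋃ T ∈ {T : Finset ι | LinearIndependent ℝ (fun k : ↥T => g (k : ι))}, coneSet g T := by
    ext z
    constructor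
    · intro hz
      obtain ⟨T', _, hLI, hmem⟩ :=
        coneSet_caratheodory g (Finset.univ : Finset ι).card Finset.univ le_rfl z hz
      exact Set.mem_biUnion hLI hmem
    · intro hz
      obtain ⟨T, hT⟩ := Set.mem_iUnion.mp hz
      obtain ⟨_, hmem⟩ := Set.mem_iUnion.mp hT
      exact coneSet_mono g (Finset.subset_univ T) hmem
  rw [heq]
  exact Set.Finite.isClosed_biUnion (Set.toFinite _) (fun T hT => coneSet_li_closed g hT)

theorem farkas (g : ι → E) (c : E)
    (h : ∀ x : E, (∀ k, 0 ≤ ⟪g k, x⟫) → 0 ≤ ⟪c, x⟫) :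
    ∃ w : ι → ℝ, (∀ k, 0 ≤ w k) ∧ ∑ k, w k • g k = c := by
  classical
  by_contra hc
  have hnmem : c ∉ coneSet g Finset.univ := by
    intro ⟨w, hw, hsum⟩; exact hc ⟨w, hw, hsum⟩
  set K : ConvexCone ℝ E :=
    { carrier := coneSet g Finset.univ
      smul_mem' := by
        rintro t ht z ⟨w, hw, rfl⟩
        refine ⟨fun k => t * w k, fun k => mul_nonneg ht.le (hw k), ?_⟩
        rw [Finset.smul_sum]
        exact Finset.sum_congr rfl (fun k _ => (smul_smul t (w k) (g k)).symm)
      add_mem' := by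
        rintro z₁ ⟨w₁, hw₁, rfl⟩ z₂ ⟨w₂, hw₂, rfl⟩
        refine ⟨fun k => w₁ k + w₂ k, fun k => add_nonneg (hw₁ k) (hw₂ k), ?_⟩
        rw [← Finset.sum_add_distrib]
        exact Finset.sum_congr rfl (fun k _ => add_smul (w₁ k) (w₂ k) (g k)) } with hK
  have hne : (K : Set E).Nonempty := ⟨0, ⟨fun _ => 0, fun _ => le_rfl, by simp⟩⟩
  have hcl : IsClosed (K : Set E) := coneSet_univ_closed g
  obtain ⟨y, hy1, hy2⟩ :=
    ProperCone.hyperplane_separation' (⟨K.toPointedCone ⟨fun _ => 0, fun _ => le_rfl, by simp⟩, hcl⟩ : ProperCone ℝ E) hnmem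
  have hgk : ∀ k, (g k : E) ∈ K := by
    intro k
    refine ⟨fun k' => if k' = k then 1 else 0, fun k' => by positivity, ?_⟩
    simp [ite_smul]
  have : 0 ≤ ⟪c, y⟫ := h y (fun k => hy1 (g k) (hgk k))
  linarith

end FarkasCone

lemma payoff_eq_row {n : ℕ} (R : Matrix (Fin n) (Fin n) ℝ) (x y : Fin n → ℝ) :
    payoff R x y = ∑ i, x i * rowPayoff R y i := by
  simp only [payoff, rowPayoff, Finset.mul_sum]
  exact Finset.sum_congr rfl fun i _ => Finset.sum_congr rfl fun j _ => by ring

lemma payoff_eq_col {n : ℕ} (R : Matrix (Fin n) (Fin n) ℝ) (x y : Fin n → ℝ) :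
    payoff R x y = ∑ j, colPayoff R x j * y j := by
  simp only [payoff, colPayoff, Finset.sum_mul]
  rw [Finset.sum_comm]

lemma dot_le {n : ℕ} {x f : Fin n → ℝ} {c : ℝ} (hx : IsProbVec x) (hf : ∀ i, f i ≤ c) :
    ∑ i, x i * f i ≤ c := by
  calc ∑ i, x i * f i ≤ ∑ i, x i * c :=
        Finset.sum_le_sum fun i _ => mul_le_mul_of_nonneg_left (hf i) (hx.1 i)
    _ = c := by rw [← Finset.sum_mul, hx.2, one_mul]

lemma dot_ge {n : ℕ} {x f : Fin n → ℝ} {c : ℝ} (hx : IsProbVec x) (hf : ∀ i, c ≤ f i) :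
    c ≤ ∑ i, x i * f i := by
  calc c = ∑ i, x i * c := by rw [← Finset.sum_mul, hx.2, one_mul]
    _ ≤ ∑ i, x i * f i :=
        Finset.sum_le_sum fun i _ => mul_le_mul_of_nonneg_left (hf i) (hx.1 i)

lemma nash_of_col_bounds {n : ℕ} {R : Matrix (Fin n) (Fin n) ℝ} {xs ys x' : Fin n → ℝ}
    (hNash : IsNash R xs ys) (hx' : IsProbVec x')
    (hc : ∀ j, payoff R xs ys ≤ colPayoff R x' j) : IsNash R x' ys := by
  have hle : payoff R x' ys ≤ payoff R xs ys := by
    rw [payoff_eq_row]; exact dot_le hx' hNash.2.2.1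
  have hge : payoff R xs ys ≤ payoff R x' ys := by
    rw [payoff_eq_col R x' ys]
    have := dot_ge hNash.2.1 hc
    calc payoff R xs ys ≤ ∑ j, ys j * colPayoff R x' j := this
      _ = ∑ j, colPayoff R x' j * ys j := Finset.sum_congr rfl fun j _ => mul_comm _ _
  have heq : payoff R x' ys = payoff R xs ys := le_antisymm hle hge
  exact ⟨hx', hNash.2.1, fun i => heq ▸ hNash.2.2.1 i, fun j => heq ▸ hc j⟩

lemma nash_of_row_bounds {n : ℕ} {R : Matrix (Fin n) (Fin n) ℝ} {xs ys y' : Fin n → ℝ}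
    (hNash : IsNash R xs ys) (hy' : IsProbVec y')
    (hr : ∀ i, rowPayoff R y' i ≤ payoff R xs ys) : IsNash R xs y' := by
  have hle : payoff R xs y' ≤ payoff R xs ys := by
    rw [payoff_eq_row]; exact dot_le hNash.1 hr
  have hge : payoff R xs ys ≤ payoff R xs y' := by
    rw [payoff_eq_col R xs y']
    have := dot_ge hy' hNash.2.2.2
    calc payoff R xs ys ≤ ∑ j, y' j * colPayoff R xs j := this
      _ = ∑ j, colPayoff R xs j * y' j := Finset.sum_congr rfl fun j _ => mul_comm _ _
  have heq : payoff R xs y' = payoff R xs ys := le_antisymm hle hge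
  exact ⟨hNash.1, hy', fun i => heq ▸ hr i, fun j => heq ▸ hNash.2.2.2 j⟩


lemma row_strict {n : ℕ} (R : Matrix (Fin n) (Fin n) ℝ) (xs ys : Fin n → ℝ)
    (hNash : IsNash R xs ys) (huniq : ∀ x y, IsNash R x y → x = xs ∧ y = ys)
    (i₀ : Fin n) (hx0 : xs i₀ = 0) : rowPayoff R ys i₀ < payoff R xs ys := by
  classical
  set v : ℝ := payoff R xs ys with hv
  set g : (Fin n ⊕ Fin n) → EuclideanSpace ℝ (Fin n) :=
    Sum.elim (fun j => (WithLp.equiv 2 (Fin n → ℝ)).symm (fun i => R i j - v))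
             (fun i => EuclideanSpace.single i 1) with hg
  have hginl : ∀ j i, g (Sum.inl j) i = R i j - v := fun j i => rfl
  have hginr : ∀ i' i, g (Sum.inr i') i = if i = i' then 1 else 0 := fun i' i => by
    simp [hg, EuclideanSpace.single_apply]
  have hcheck : ∀ x : EuclideanSpace ℝ (Fin n), (∀ k, 0 ≤ ⟪g k, x⟫) →
      0 ≤ ⟪-(EuclideanSpace.single i₀ (1:ℝ)), x⟫ := by
    intro x hx
    have hx0' : ∀ i, (0:ℝ) ≤ x i := by
      intro i
      have h1 := hx (Sum.inr i)
      rw [hg, Sum.elim_inr, EuclideanSpace.inner_single_left] at h1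
      simpa using h1
    have hxcol : ∀ j, 0 ≤ ∑ i, (R i j - v) * x i := by
      intro j
      have h1 := hx (Sum.inl j)
      rw [hg, Sum.elim_inl, PiLp.inner_apply] at h1
      simpa [mul_comm] using h1
    have hxi₀ : x i₀ = 0 := by
      set s : ℝ := ∑ i, x i with hs
      have hs0 : 0 ≤ s := Finset.sum_nonneg fun i _ => hx0' i
      rcases eq_or_lt_of_le hs0 with hseq | hspos
      · have := (Finset.sum_eq_zero_iff_of_nonneg (fun i _ => hx0' i)).mp hseq.symm
        exact this i₀ (Finset.mem_univ i₀)
      · set x' : Fin n → ℝ := fun i => x i / s with hx'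
        have hx'p : IsProbVec x' := by
          constructor
          · intro i; exact div_nonneg (hx0' i) hs0
          · show (∑ i, x i / s) = 1
            rw [← Finset.sum_div, ← hs, div_self hspos.ne']
        have hcolx' : ∀ j, v ≤ colPayoff R x' j := by
          intro j
          have h2 := hxcol j
          have heq : ∑ i, (R i j - v) * x i = (∑ i, x i * R i j) - v * s := by
            rw [hs, Finset.mul_sum, ← Finset.sum_sub_distrib]
            exact Finset.sum_congr rfl fun i _ => by ring
          have h3 : v * s ≤ ∑ i, x i * R i j := by
            rw [heq] at h2; linarith
          have h4 : colPayoff R x' j = (∑ i, x i * R i j) / s := by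
            show (∑ i, x' i * R i j) = _
            rw [Finset.sum_div]
            exact Finset.sum_congr rfl fun i _ => by show x i / s * R i j = _; ring
          rw [h4, le_div_iff₀ hspos]
          linarith
        have hN := nash_of_col_bounds hNash hx'p hcolx'
        have hxe := (huniq x' ys hN).1
        have hz : x i₀ / s = 0 := by rw [show x i₀ / s = x' i₀ from rfl, hxe]; exact hx0
        rcases div_eq_zero_iff.mp hz with h | h
        · exact h
        · exact absurd h hspos.ne'
    rw [inner_neg_left, EuclideanSpace.inner_single_left]
    simp [hxi₀]
  obtain ⟨w, hw, hsum⟩ := farkas g (-(EuclideanSpace.single i₀ (1:ℝ))) hcheck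
  have hcoord : ∀ i, (∑ j, w (Sum.inl j) * (R i j - v)) + w (Sum.inr i)
      = -(if i = i₀ then 1 else 0) := by
    intro i
    have h1 := congrArg (fun z : EuclideanSpace ℝ (Fin n) =>
      ⟪z, EuclideanSpace.single i (1:ℝ)⟫) hsum
    simp only [sum_inner, real_inner_smul_left, EuclideanSpace.inner_single_right,
      inner_neg_left, conj_trivial, one_mul, mul_one] at h1
    rw [Fintype.sum_sum_type] at h1
    have e1 : ∀ j, g (Sum.inl j) i = R i j - v := fun j => hginl j i
    have e2 : ∀ i', g (Sum.inr i') i = if i = i' then 1 else 0 := fun i' => hginr i' i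
    simp only [PiLp.smul_apply, smul_eq_mul, e1, e2, mul_ite, mul_one, mul_zero,
      PiLp.neg_apply, EuclideanSpace.single_apply] at h1
    rw [Finset.sum_ite_eq Finset.univ i (fun i' => w (Sum.inr i'))] at h1
    simp only [Finset.mem_univ, if_true] at h1
    exact h1
  have hle : ∀ i, (∑ j, w (Sum.inl j) * (R i j - v)) ≤ -(if i = i₀ then 1 else 0) := by
    intro i
    have h1 := hcoord i
    have h2 := hw (Sum.inr i)
    linarith
  set T : ℝ := ∑ j, w (Sum.inl j) with hT
  have hT0 : 0 ≤ T := Finset.sum_nonneg fun j _ => hw (Sum.inl j)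
  have hTpos : 0 < T := by
    rcases eq_or_lt_of_le hT0 with h | h
    · exfalso
      have hz := (Finset.sum_eq_zero_iff_of_nonneg (fun j _ => hw (Sum.inl j))).mp h.symm
      have h7 : (∑ j, w (Sum.inl j) * (R i₀ j - v)) = 0 :=
        Finset.sum_eq_zero fun j _ => by rw [hz j (Finset.mem_univ j), zero_mul]
      have h8 := hle i₀
      rw [if_pos rfl, h7] at h8
      linarith
    · exact h
  set y' : Fin n → ℝ := fun j => w (Sum.inl j) / T with hy'
  have hy'p : IsProbVec y' := by
    constructor
    · intro j; exact div_nonneg (hw (Sum.inl j)) hT0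
    · show (∑ j, w (Sum.inl j) / T) = 1
      rw [← Finset.sum_div, ← hT, div_self hTpos.ne']
  have hkey : ∀ i, rowPayoff R y' i ≤ v - (if i = i₀ then 1 else 0) / T := by
    intro i
    have h2 := hle i
    have heq : ∑ j, w (Sum.inl j) * (R i j - v) = (∑ j, w (Sum.inl j) * R i j) - v * T := by
      rw [hT, Finset.mul_sum, ← Finset.sum_sub_distrib]
      exact Finset.sum_congr rfl fun j _ => by ring
    have h3 : ∑ j, w (Sum.inl j) * R i j ≤ v * T - (if i = i₀ then 1 else 0) := by
      rw [heq] at h2; linarith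
    have h4 : rowPayoff R y' i = (∑ j, w (Sum.inl j) * R i j) / T := by
      show (∑ j, R i j * y' j) = _
      rw [Finset.sum_div]
      exact Finset.sum_congr rfl fun j _ => by show R i j * (w (Sum.inl j) / T) = _; ring
    rw [h4, div_le_iff₀ hTpos]
    have h5 : (v - (if i = i₀ then 1 else 0) / T) * T = v * T - (if i = i₀ then 1 else 0) := by
      field_simp
    rw [h5]
    exact h3
  have hrowy' : ∀ i, rowPayoff R y' i ≤ v := by
    intro i
    have h6 := hkey i
    have h5 : 0 ≤ (if i = i₀ then (1:ℝ) else 0) / T :=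
      div_nonneg (by positivity) hT0
    linarith
  have hN2 := nash_of_row_bounds hNash hy'p hrowy'
  have hye := (huniq xs y' hN2).2
  have h9 := hkey i₀
  rw [if_pos rfl, hye] at h9
  have h6 : 0 < 1 / T := by positivity
  linarith

lemma payoff_tr {n : ℕ} (R : Matrix (Fin n) (Fin n) ℝ) (x y : Fin n → ℝ) :
    payoff (fun i j => -(R j i)) y x = -(payoff R x y) := by
  simp only [payoff]
  rw [Finset.sum_comm, ← Finset.sum_neg_distrib]
  refine Finset.sum_congr rfl fun a _ => ?_
  rw [← Finset.sum_neg_distrib]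
  exact Finset.sum_congr rfl fun b _ => by ring

lemma rowPayoff_tr {n : ℕ} (R : Matrix (Fin n) (Fin n) ℝ) (x : Fin n → ℝ) (j : Fin n) :
    rowPayoff (fun i j => -(R j i)) x j = -(colPayoff R x j) := by
  simp only [rowPayoff, colPayoff]
  rw [← Finset.sum_neg_distrib]
  exact Finset.sum_congr rfl fun k _ => by ring

lemma colPayoff_tr {n : ℕ} (R : Matrix (Fin n) (Fin n) ℝ) (y : Fin n → ℝ) (i : Fin n) :
    colPayoff (fun i j => -(R j i)) y i = -(rowPayoff R y i) := by
  simp only [colPayoff, rowPayoff]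
  rw [← Finset.sum_neg_distrib]
  exact Finset.sum_congr rfl fun k _ => by ring

lemma nash_tr {n : ℕ} {R : Matrix (Fin n) (Fin n) ℝ} {x y : Fin n → ℝ}
    (h : IsNash R x y) : IsNash (fun i j => -(R j i)) y x := by
  obtain ⟨hx, hy, hr, hc⟩ := h
  refine ⟨hy, hx, fun j => ?_, fun i => ?_⟩
  · rw [rowPayoff_tr, payoff_tr]; exact neg_le_neg (hc j)
  · rw [colPayoff_tr, payoff_tr]; exact neg_le_neg (hr i)

lemma nash_untr {n : ℕ} {R : Matrix (Fin n) (Fin n) ℝ} {x y : Fin n → ℝ}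
    (h : IsNash (fun i j => -(R j i)) y x) : IsNash R x y := by
  have h2 := nash_tr h
  simp only [neg_neg] at h2
  exact h2

theorem quasi_strict_core {n : ℕ} (R : Matrix (Fin n) (Fin n) ℝ)
    (xs ys : Fin n → ℝ) (hNash : IsNash R xs ys)
    (huniq : ∀ x y, IsNash R x y → x = xs ∧ y = ys) :
    (∀ i, xs i = 0 → rowPayoff R ys i < payoff R xs ys) ∧
    (∀ j, ys j = 0 → payoff R xs ys < colPayoff R xs j) := by
  constructor
  · exact fun i hi => row_strict R xs ys hNash huniq i hi
  · intro j hj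
    have huniq' : ∀ y x, IsNash (fun i j => -(R j i)) y x → y = ys ∧ x = xs := by
      intro y x hN
      have := huniq x y (nash_untr hN)
      exact ⟨this.2, this.1⟩
    have h := row_strict (fun i j => -(R j i)) ys xs (nash_tr hNash) huniq' j hj
    rw [rowPayoff_tr, payoff_tr] at h
    linarith

/-- A unique Nash equilibrium of a zero-sum game is quasi-strict: pure
strategies outside the supports obtain strictly worse payoff than the value `v = xsᵀRys`.
In particular, for any `η > 0` the corresponding exponential ratios are strictly below one. -/
theorem unique_nash_quasi_strict {n : ℕ} (R : Matrix (Fin n) (Fin n) ℝ)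
    (xs ys : Fin n → ℝ) (hNash : IsNash R xs ys)
    (huniq : ∀ x y, IsNash R x y → x = xs ∧ y = ys) :
    (∀ i, xs i = 0 → rowPayoff R ys i < payoff R xs ys) ∧
    (∀ j, ys j = 0 → payoff R xs ys < colPayoff R xs j) ∧
    (∀ η > (0 : ℝ),
      (∀ i, xs i = 0 →
        Real.exp (η * rowPayoff R ys i) / Real.exp (η * payoff R xs ys) < 1) ∧
      (∀ j, ys j = 0 →
        Real.exp (-(η * colPayoff R xs j)) / Real.exp (-(η * payoff R xs ys)) < 1)) := by
  obtain ⟨h1, h2⟩ := quasi_strict_core R xs ys hNash huniq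
  refine ⟨h1, h2, fun η hη => ⟨fun i hi => ?_, fun j hj => ?_⟩⟩
  · rw [div_lt_one (Real.exp_pos _), Real.exp_lt_exp]
    exact (mul_lt_mul_iff_right₀ hη).mpr (h1 i hi)
  · rw [div_lt_one (Real.exp_pos _), Real.exp_lt_exp]
    exact neg_lt_neg ((mul_lt_mul_iff_right₀ hη).mpr (h2 j hj))
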